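/- Let s ∈ (0,1) and let u : {(x₁,x₂) ∈ ℝ² : x₂ > 0} → ℝ be C². Define Φ(y₁,y₂) := (½(y₁² − y₂²), y₁ y₂) for y₁, y₂ > 0, and v := u ∘ Φ. Then on the open quarter-plane {y₁ > 0, y₂ > 0}: ∂₁((y₁y₂)^{1−2s} ∂₁ v) + ∂₂((y₁y₂)^{1−2s} ∂₂ v) = (y₁² + y₂²) · [∂₁(x₂^{1−2s}∂₁u) + ∂₂(x₂^{1−2s}∂₂u)] ∘ Φ. -/

import Mathlib

open Real

/-- "Opening up the domain": under the square map
`Φ(y₁,y₂) = (½(y₁²-y₂²), y₁y₂)`, the fractional Baouendi–Grushin operator applied to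
`v = u ∘ Φ` equals `(y₁²+y₂²)` times the pullback of `L_s u`. -/
theorem stmt16 (s : ℝ) (hs : s ∈ Set.Ioo (0 : ℝ) 1) (u : ℝ → ℝ → ℝ)
    (hu : ContDiffOn ℝ 2 (fun p : ℝ × ℝ => u p.1 p.2) {p : ℝ × ℝ | 0 < p.2})
    (y₁ y₂ : ℝ) (h₁ : 0 < y₁) (h₂ : 0 < y₂) :
    deriv (fun t => (t * y₂) ^ (1 - 2 * s) *
        deriv (fun a => u ((a ^ 2 - y₂ ^ 2) / 2) (a * y₂)) t) y₁
      + deriv (fun t => (y₁ * t) ^ (1 - 2 * s) *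
          deriv (fun b => u ((y₁ ^ 2 - b ^ 2) / 2) (y₁ * b)) t) y₂
      = (y₁ ^ 2 + y₂ ^ 2) *
          (deriv (fun t => (y₁ * y₂) ^ (1 - 2 * s) *
              deriv (fun a => u a (y₁ * y₂)) t) ((y₁ ^ 2 - y₂ ^ 2) / 2)
            + deriv (fun t => t ^ (1 - 2 * s) *
                deriv (fun b => u ((y₁ ^ 2 - y₂ ^ 2) / 2) b) t) (y₁ * y₂)) := by
  set σ : ℝ := 1 - 2 * s with hσdef
  set f : ℝ × ℝ → ℝ := fun p => u p.1 p.2 with hfdef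
  have hUopen : IsOpen {p : ℝ × ℝ | 0 < p.2} :=
    isOpen_lt continuous_const continuous_snd
  have hdiff : ∀ p : ℝ × ℝ, 0 < p.2 → DifferentiableAt ℝ f p := fun p hp =>
    (hu.contDiffAt (hUopen.mem_nhds hp)).differentiableAt two_ne_zero
  set F : ℝ × ℝ → (ℝ × ℝ →L[ℝ] ℝ) := fun p => fderiv ℝ f p with hFdef
  have hx2 : (0:ℝ) < y₁ * y₂ := mul_pos h₁ h₂
  have hFdiff : DifferentiableAt ℝ F (((y₁ ^ 2 - y₂ ^ 2) / 2, y₁ * y₂) : ℝ × ℝ) := by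
    have h2 : ContDiffAt ℝ 2 f (((y₁ ^ 2 - y₂ ^ 2) / 2, y₁ * y₂) : ℝ × ℝ) :=
      hu.contDiffAt (hUopen.mem_nhds hx2)
    exact (h2.fderiv_right (by norm_num : (1:WithTop ℕ∞) + 1 ≤ 2)).differentiableAt one_ne_zero
  set P : ℝ × ℝ := ((y₁ ^ 2 - y₂ ^ 2) / 2, y₁ * y₂) with hPdef
  set A : ℝ × ℝ →L[ℝ] ℝ := F P with hAdef
  set B : ℝ × ℝ →L[ℝ] (ℝ × ℝ →L[ℝ] ℝ) := fderiv ℝ F P with hBdef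
  -- linearity expansion
  have hlin : ∀ (T : ℝ × ℝ →L[ℝ] ℝ) (a b : ℝ), T (a, b) = a * T (1, 0) + b * T (0, 1) := by
    intro T a b
    have h : ((a, b) : ℝ × ℝ) = a • ((1, 0) : ℝ × ℝ) + b • ((0, 1) : ℝ × ℝ) := by
      simp [Prod.ext_iff]
    rw [h, map_add, map_smul, map_smul, smul_eq_mul, smul_eq_mul]
  have hBlin : ∀ a b c d : ℝ, B (a, b) (c, d)
      = a * c * B (1,0) (1,0) + a * d * B (1,0) (0,1)
        + b * c * B (0,1) (1,0) + b * d * B (0,1) (0,1) := by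
    intro a b c d
    have h : ((a, b) : ℝ × ℝ) = a • ((1, 0) : ℝ × ℝ) + b • ((0, 1) : ℝ × ℝ) := by
      simp [Prod.ext_iff]
    rw [h, map_add, map_smul, map_smul]
    simp only [ContinuousLinearMap.add_apply, ContinuousLinearMap.coe_smul',
      Pi.smul_apply, smul_eq_mul]
    rw [hlin (B (1,0)) c d, hlin (B (0,1)) c d]
    ring
  -- inner derivative identities
  have inner1 : ∀ t : ℝ, 0 < t →
      deriv (fun a => u ((a ^ 2 - y₂ ^ 2) / 2) (a * y₂)) t
        = F (((t ^ 2 - y₂ ^ 2) / 2, t * y₂) : ℝ × ℝ) ((t, y₂) : ℝ × ℝ) := by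
    intro t ht
    have hγ : HasDerivAt (fun a : ℝ => (((a ^ 2 - y₂ ^ 2) / 2, a * y₂) : ℝ × ℝ))
        ((t, y₂) : ℝ × ℝ) t := by
      apply HasDerivAt.prodMk
      · have := ((hasDerivAt_pow 2 t).sub_const (y₂ ^ 2)).div_const 2
        convert this using 1; rfl; push_cast; ring
      · simpa using (hasDerivAt_id t).mul_const y₂
    exact (((hdiff _ (mul_pos ht h₂)).hasFDerivAt).comp_hasDerivAt t hγ).deriv
  have inner2 : ∀ t : ℝ, 0 < t →
      deriv (fun b => u ((y₁ ^ 2 - b ^ 2) / 2) (y₁ * b)) t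
        = F (((y₁ ^ 2 - t ^ 2) / 2, y₁ * t) : ℝ × ℝ) ((-t, y₁) : ℝ × ℝ) := by
    intro t ht
    have hγ : HasDerivAt (fun b : ℝ => (((y₁ ^ 2 - b ^ 2) / 2, y₁ * b) : ℝ × ℝ))
        ((-t, y₁) : ℝ × ℝ) t := by
      apply HasDerivAt.prodMk
      · have := ((hasDerivAt_pow 2 t).const_sub (y₁ ^ 2)).div_const 2
        convert this using 1; rfl; push_cast; ring
      · simpa using (hasDerivAt_id t).const_mul y₁
    exact (((hdiff _ (mul_pos h₁ ht)).hasFDerivAt).comp_hasDerivAt t hγ).deriv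
  have inner3 : ∀ t : ℝ,
      deriv (fun a => u a (y₁ * y₂)) t = F ((t, y₁ * y₂) : ℝ × ℝ) ((1, 0) : ℝ × ℝ) := by
    intro t
    have hγ : HasDerivAt (fun a : ℝ => ((a, y₁ * y₂) : ℝ × ℝ)) ((1, 0) : ℝ × ℝ) t :=
      (hasDerivAt_id t).prodMk (hasDerivAt_const t _)
    exact (((hdiff _ hx2).hasFDerivAt).comp_hasDerivAt t hγ).deriv
  have inner4 : ∀ t : ℝ, 0 < t →
      deriv (fun b => u ((y₁ ^ 2 - y₂ ^ 2) / 2) b)  t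
        = F (((y₁ ^ 2 - y₂ ^ 2) / 2, t) : ℝ × ℝ) ((0, 1) : ℝ × ℝ) := by
    intro t ht
    have hγ : HasDerivAt (fun b : ℝ => (((y₁ ^ 2 - y₂ ^ 2) / 2, b) : ℝ × ℝ))
        ((0, 1) : ℝ × ℝ) t :=
      (hasDerivAt_const t _).prodMk (hasDerivAt_id t)
    exact (((hdiff _ ht).hasFDerivAt).comp_hasDerivAt t hγ).deriv
  -- outer derivatives
  have d1 : deriv (fun t => (t * y₂) ^ σ *
      deriv (fun a => u ((a ^ 2 - y₂ ^ 2) / 2) (a * y₂)) t) y₁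
      = y₂ * σ * (y₁ * y₂) ^ (σ - 1) * A (y₁, y₂)
        + (y₁ * y₂) ^ σ * (B (y₁, y₂) (y₁, y₂) + A (1, 0)) := by
    have hev : (fun t => (t * y₂) ^ σ *
        deriv (fun a => u ((a ^ 2 - y₂ ^ 2) / 2) (a * y₂)) t)
        =ᶠ[nhds y₁] fun t => (t * y₂) ^ σ *
          F (((t ^ 2 - y₂ ^ 2) / 2, t * y₂) : ℝ × ℝ) ((t, y₂) : ℝ × ℝ) := by
      filter_upwards [Ioi_mem_nhds h₁] with t ht
      rw [inner1 t ht]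
    rw [hev.deriv_eq]
    have hpow : HasDerivAt (fun t : ℝ => (t * y₂) ^ σ)
        (y₂ * σ * (y₁ * y₂) ^ (σ - 1)) y₁ := by
      have h0 : HasDerivAt (fun t : ℝ => t * y₂) y₂ y₁ := by
        simpa using (hasDerivAt_id y₁).mul_const y₂
      exact h0.rpow_const (Or.inl (ne_of_gt hx2))
    have hγ : HasDerivAt (fun t : ℝ => (((t ^ 2 - y₂ ^ 2) / 2, t * y₂) : ℝ × ℝ))
        ((y₁, y₂) : ℝ × ℝ) y₁ := by
      apply HasDerivAt.prodMk
      · have := ((hasDerivAt_pow 2 y₁).sub_const (y₂ ^ 2)).div_const 2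
        convert this using 1; rfl; push_cast; ring
      · simpa using (hasDerivAt_id y₁).mul_const y₂
    have hc : HasDerivAt (fun t : ℝ => F (((t ^ 2 - y₂ ^ 2) / 2, t * y₂) : ℝ × ℝ))
        (B (y₁, y₂)) y₁ := hFdiff.hasFDerivAt.comp_hasDerivAt y₁ hγ
    have hv : HasDerivAt (fun t : ℝ => ((t, y₂) : ℝ × ℝ)) ((1, 0) : ℝ × ℝ) y₁ :=
      (hasDerivAt_id y₁).prodMk (hasDerivAt_const y₁ _)
    have := hpow.mul (hc.clm_apply hv)
    erw [this.deriv]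
  have d2 : deriv (fun t => (y₁ * t) ^ σ *
      deriv (fun b => u ((y₁ ^ 2 - b ^ 2) / 2) (y₁ * b)) t) y₂
      = y₁ * σ * (y₁ * y₂) ^ (σ - 1) * A (-y₂, y₁)
        + (y₁ * y₂) ^ σ * (B (-y₂, y₁) (-y₂, y₁) + A (-1, 0)) := by
    have hev : (fun t => (y₁ * t) ^ σ *
        deriv (fun b => u ((y₁ ^ 2 - b ^ 2) / 2) (y₁ * b)) t)
        =ᶠ[nhds y₂] fun t => (y₁ * t) ^ σ *
          F (((y₁ ^ 2 - t ^ 2) / 2, y₁ * t) : ℝ × ℝ) ((-t, y₁) : ℝ × ℝ) := by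
      filter_upwards [Ioi_mem_nhds h₂] with t ht
      rw [inner2 t ht]
    rw [hev.deriv_eq]
    have hpow : HasDerivAt (fun t : ℝ => (y₁ * t) ^ σ)
        (y₁ * σ * (y₁ * y₂) ^ (σ - 1)) y₂ := by
      have h0 : HasDerivAt (fun t : ℝ => y₁ * t) y₁ y₂ := by
        simpa using (hasDerivAt_id y₂).const_mul y₁
      exact h0.rpow_const (Or.inl (ne_of_gt hx2))
    have hγ : HasDerivAt (fun t : ℝ => (((y₁ ^ 2 - t ^ 2) / 2, y₁ * t) : ℝ × ℝ))
        ((-y₂, y₁) : ℝ × ℝ) y₂ := by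
      apply HasDerivAt.prodMk
      · have := ((hasDerivAt_pow 2 y₂).const_sub (y₁ ^ 2)).div_const 2
        convert this using 1; rfl; push_cast; ring
      · simpa using (hasDerivAt_id y₂).const_mul y₁
    have hc : HasDerivAt (fun t : ℝ => F (((y₁ ^ 2 - t ^ 2) / 2, y₁ * t) : ℝ × ℝ))
        (B (-y₂, y₁)) y₂ := hFdiff.hasFDerivAt.comp_hasDerivAt y₂ hγ
    have hv : HasDerivAt (fun t : ℝ => ((-t, y₁) : ℝ × ℝ)) ((-1, 0) : ℝ × ℝ) y₂ :=
      ((hasDerivAt_id y₂).neg).prodMk (hasDerivAt_const y₂ _)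
    have := hpow.mul (hc.clm_apply hv)
    erw [this.deriv]
  have d3 : deriv (fun t => (y₁ * y₂) ^ σ *
      deriv (fun a => u a (y₁ * y₂)) t) ((y₁ ^ 2 - y₂ ^ 2) / 2)
      = (y₁ * y₂) ^ σ * B (1, 0) (1, 0) := by
    have hev : (fun t => (y₁ * y₂) ^ σ * deriv (fun a => u a (y₁ * y₂)) t)
        = fun t => (y₁ * y₂) ^ σ * F ((t, y₁ * y₂) : ℝ × ℝ) ((1, 0) : ℝ × ℝ) := by
      funext t; rw [inner3 t]
    rw [hev]
    have hγ : HasDerivAt (fun t : ℝ => ((t, y₁ * y₂) : ℝ × ℝ)) ((1, 0) : ℝ × ℝ)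
        ((y₁ ^ 2 - y₂ ^ 2) / 2) :=
      (hasDerivAt_id _).prodMk (hasDerivAt_const _ _)
    have hc : HasDerivAt (fun t : ℝ => F ((t, y₁ * y₂) : ℝ × ℝ)) (B (1, 0))
        ((y₁ ^ 2 - y₂ ^ 2) / 2) := hFdiff.hasFDerivAt.comp_hasDerivAt ((y₁ ^ 2 - y₂ ^ 2) / 2) hγ
    have hv : HasDerivAt (fun _ : ℝ => ((1, 0) : ℝ × ℝ)) ((0, 0) : ℝ × ℝ)
        ((y₁ ^ 2 - y₂ ^ 2) / 2) := hasDerivAt_const _ _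
    have := (hc.clm_apply hv).const_mul ((y₁ * y₂) ^ σ)
    rw [this.deriv]
    have : A ((0, 0) : ℝ × ℝ) = 0 := by
      have : ((0, 0) : ℝ × ℝ) = 0 := rfl
      rw [this, map_zero]
    simp only [hPdef] at *
    rw [this]
    ring
  have d4 : deriv (fun t => t ^ σ *
      deriv (fun b => u ((y₁ ^ 2 - y₂ ^ 2) / 2) b) t) (y₁ * y₂)
      = σ * (y₁ * y₂) ^ (σ - 1) * A (0, 1)
        + (y₁ * y₂) ^ σ * B (0, 1) (0, 1) := by
    have hev : (fun t => t ^ σ * deriv (fun b => u ((y₁ ^ 2 - y₂ ^ 2) / 2) b) t)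
        =ᶠ[nhds (y₁ * y₂)] fun t => t ^ σ *
          F (((y₁ ^ 2 - y₂ ^ 2) / 2, t) : ℝ × ℝ) ((0, 1) : ℝ × ℝ) := by
      filter_upwards [Ioi_mem_nhds hx2] with t ht
      rw [inner4 t ht]
    rw [hev.deriv_eq]
    have hpow : HasDerivAt (fun t : ℝ => t ^ σ)
        (1 * σ * (y₁ * y₂) ^ (σ - 1)) (y₁ * y₂) :=
      (hasDerivAt_id _).rpow_const (Or.inl (ne_of_gt hx2))
    have hγ : HasDerivAt (fun t : ℝ => (((y₁ ^ 2 - y₂ ^ 2) / 2, t) : ℝ × ℝ))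
        ((0, 1) : ℝ × ℝ) (y₁ * y₂) :=
      (hasDerivAt_const _ _).prodMk (hasDerivAt_id _)
    have hc : HasDerivAt (fun t : ℝ => F (((y₁ ^ 2 - y₂ ^ 2) / 2, t) : ℝ × ℝ))
        (B (0, 1)) (y₁ * y₂) := hFdiff.hasFDerivAt.comp_hasDerivAt (y₁ * y₂) hγ
    have hv : HasDerivAt (fun _ : ℝ => ((0, 1) : ℝ × ℝ)) ((0, 0) : ℝ × ℝ) (y₁ * y₂) :=
      hasDerivAt_const _ _
    have := hpow.mul (hc.clm_apply hv)
    erw [this.deriv]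
    have hz : A ((0, 0) : ℝ × ℝ) = 0 := by
      have : ((0, 0) : ℝ × ℝ) = 0 := rfl
      rw [this, map_zero]
    simp only [hPdef] at *
    rw [hz]
    ring
  rw [d1, d2, d3, d4]
  rw [hlin A y₁ y₂, hlin A (-y₂) y₁, hlin A (-1) 0, hlin A 0 1,
    hBlin y₁ y₂ y₁ y₂, hBlin (-y₂) y₁ (-y₂) y₁]
  ring
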